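/- Let n = m(m+1)/2 be a triangular number and let g ∈ Σ_n be a permutation of cycle type λ = [2m−1, 2m−5, 2m−9, …] (the diagonal hook lengths of the staircase partition [m, m−1, …, 1]). Then the centralizer C_{Σ_n}(g) has odd order, and g is inverted by an involution t ∈ Σ_n that is a product of ⌊(m²+1)/4⌋ disjoint transpositions. -/

import Mathlib

open Equiv Equiv.Perm Multiset Finset

-- the multiset of cycle lengths
def MsetX (m : ℕ) : Multiset ℕ :=
  ((Multiset.range ((m + 1) / 2)).map (fun i => 2 * m - 1 - 4 * i)).filter (fun l => 2 ≤ l)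

lemma MsetX_odd {m : ℕ} {l : ℕ} (hl : l ∈ MsetX m) : Odd l := by
  simp only [MsetX, Multiset.mem_filter, Multiset.mem_map, Multiset.mem_range] at hl
  obtain ⟨⟨i, hi, rfl⟩, h2⟩ := hl
  rw [Nat.odd_iff]
  omega

lemma MsetX_nodup (m : ℕ) : (MsetX m).Nodup := by
  apply Multiset.Nodup.filter
  apply Multiset.Nodup.map_on _ (Multiset.nodup_range _)
  intro i hi j hj hij
  simp only [Multiset.mem_range] at hi hj
  omega

lemma sum_aux (m : ℕ) : ∀ k, 2 * k ≤ m + 1 →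
    (∑ i ∈ Finset.range k, (2 * m - 1 - 4 * i)) + 2 * (k * k) = k * (2 * m + 1) := by
  intro k
  induction k with
  | zero => simp
  | succ k ih =>
    intro hk
    rw [Finset.sum_range_succ]
    have h1 := ih (by omega)
    have h2 : (k+1) * (2*m+1) = k * (2*m+1) + 2*m+1 := by ring
    have h3 : (k+1)*(k+1) = k*k + 2*k + 1 := by ring
    omega

lemma msum_eq (a : ℕ) (f : ℕ → ℕ) :
    ((Multiset.range a).map f).sum = ∑ i ∈ Finset.range a, f i := by
  rw [Finset.sum_eq_multiset_sum, Finset.range_val]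

lemma MsetX_spec (m n : ℕ) (hm : 0 < m) (hn : 2 * n = m * (m + 1)) :
    n ≤ (MsetX m).sum + 1 ∧ (MsetX m).sum ≤ n ∧
    (MsetX m).sum = (MsetX m).card + 2 * ((m ^ 2 + 1) / 4) := by
  obtain ⟨a, rfl | rfl⟩ := Nat.even_or_odd' m
  · -- m = 2a
    have ha : 0 < a := by omega
    have he : MsetX (2*a) = (Multiset.range a).map (fun i => 2*(2*a) - 1 - 4*i) := by
      unfold MsetX
      have h2 : (2*a + 1)/2 = a := by omega
      rw [h2]
      apply Multiset.filter_eq_self.mpr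
      intro l hl
      simp only [Multiset.mem_map, Multiset.mem_range] at hl
      obtain ⟨i, hi, rfl⟩ := hl
      omega
    have hs := sum_aux (2*a) a (by omega)
    rw [he, msum_eq, Multiset.card_map, Multiset.card_range]
    have h3 : a * (2*(2*a)+1) = 4*(a*a) + a := by ring
    have h4 : 2*a*(2*a+1) = 2*(2*(a*a)+a) := by ring
    rw [h4] at hn
    have h5 : (2*a)^2 = 4*(a*a) := by ring
    rw [h5]
    omega
  · -- m = 2a+1
    have he : MsetX (2*a+1) = (Multiset.range a).map (fun i => 2*(2*a+1) - 1 - 4*i) := by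
      unfold MsetX
      have h2 : (2*a+1+1)/2 = a + 1 := by omega
      rw [h2, Multiset.range_succ, Multiset.map_cons,
        Multiset.filter_cons_of_neg _ (by omega)]
      apply Multiset.filter_eq_self.mpr
      intro l hl
      simp only [Multiset.mem_map, Multiset.mem_range] at hl
      obtain ⟨i, hi, rfl⟩ := hl
      omega
    have hs := sum_aux (2*a+1) (a+1) (by omega)
    rw [Finset.sum_range_succ] at hs
    rw [he, msum_eq, Multiset.card_map, Multiset.card_range]
    have h3 : (a+1) * (2*(2*a+1)+1) = 4*(a*a) + 7*a + 3 := by ring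
    have h35 : (a+1)*(a+1) = a*a + 2*a + 1 := by ring
    have h4 : (2*a+1)*(2*a+1+1) = 2*(2*(a*a)+3*a+1) := by ring
    rw [h4] at hn
    have h5 : (2*a+1)^2 = 4*(a*a) + 4*a + 1 := by ring
    rw [h5]
    have h6 : 2*(2*a+1) - 1 - 4*a = 1 := by omega
    rw [h6] at hs
    omega

variable {α : Type*} [Fintype α] [DecidableEq α]

-- u conjugates g to g or g⁻¹; then u maps support to support
lemma support_mem_of_conj {u g : Perm α} (hu : u * g * u⁻¹ = g ∨ u * g * u⁻¹ = g⁻¹)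
    {x : α} (hx : x ∈ g.support) : u x ∈ g.support := by
  have h1 : (u * g * u⁻¹).support = g.support.map u.toEmbedding := Equiv.Perm.support_conj
  have h2 : (u * g * u⁻¹).support = g.support := by
    rcases hu with h | h <;> rw [h]
    exact Equiv.Perm.support_inv g
  rw [h2] at h1
  rw [h1]
  exact Finset.mem_map_of_mem _ hx

lemma sameCycle_of_conj {u g : Perm α} (hn : g.cycleType.Nodup)
    (hu : u * g * u⁻¹ = g ∨ u * g * u⁻¹ = g⁻¹) {x : α} (hx : x ∈ g.support) :
    g.SameCycle x (u x) := by
  have hux : u x ∈ g.support := support_mem_of_conj hu hx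
  have hmap : ∀ a b : α, g.SameCycle (u a) (u b) ↔ g.SameCycle a b := by
    intro a b
    rcases hu with h | h
    · conv_lhs => rw [← h]
      rw [Equiv.Perm.sameCycle_conj]
      simp
    · rw [← Equiv.Perm.sameCycle_inv (f := g)]
      conv_lhs => rw [← h]
      rw [Equiv.Perm.sameCycle_conj]
      simp
  have hsupp : ∀ y : α, y ∈ g.support →
      (g.cycleOf y).support = Finset.univ.filter (fun z => g.SameCycle y z) := by
    intro y hy
    ext z
    rw [Equiv.Perm.mem_support_cycleOf_iff]
    simp [hy]
  have hcard : (g.cycleOf (u x)).support.card = (g.cycleOf x).support.card := by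
    rw [hsupp _ hux, hsupp _ hx]
    apply Finset.card_bij (fun z _ => u⁻¹ z)
    · intro z hz
      simp only [Finset.mem_filter, Finset.mem_univ, true_and] at hz ⊢
      rw [← hmap]
      simpa using hz
    · intro z₁ h₁ z₂ h₂ he
      exact u⁻¹.injective he
    · intro z hz
      simp only [Finset.mem_filter, Finset.mem_univ, true_and] at hz ⊢
      exact ⟨u z, by rwa [hmap], by simp⟩
  have h1 : g.cycleOf (u x) ∈ g.cycleFactorsFinset :=
    Equiv.Perm.cycleOf_mem_cycleFactorsFinset_iff.mpr hux
  have h2 : g.cycleOf x ∈ g.cycleFactorsFinset :=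
    Equiv.Perm.cycleOf_mem_cycleFactorsFinset_iff.mpr hx
  have heq : g.cycleOf (u x) = g.cycleOf x := by
    have := Multiset.inj_on_of_nodup_map (f := Finset.card ∘ Equiv.Perm.support)
      (s := g.cycleFactorsFinset.1) (by rw [← Equiv.Perm.cycleType_def]; exact hn)
    exact this _ h1 _ h2 hcard
  have : u x ∈ (g.cycleOf (u x)).support :=
    Equiv.Perm.mem_support_cycleOf_iff.mpr ⟨Equiv.Perm.SameCycle.refl _ _, hux⟩
  rw [heq, Equiv.Perm.mem_support_cycleOf_iff] at this
  exact this.1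

-- if all cycle lengths are odd and g^(2j) fixes x then g^j fixes x
lemma odd_fix {g : Perm α} (hodd : ∀ l ∈ g.cycleType, Odd l) {x : α}
    (hx : x ∈ g.support) {j : ℤ} (h2j : (g ^ (2 * j)) x = x) : (g ^ j) x = x := by
  set σ := g.cycleOf x with hσ
  have hcyc : σ.IsCycle := Equiv.Perm.isCycle_cycleOf g (Equiv.Perm.mem_support.mp hx)
  have hord : orderOf σ = σ.support.card := hcyc.orderOf
  have hl : Odd (σ.support.card) := by
    apply hodd
    rw [Equiv.Perm.cycleType_def]
    exact Multiset.mem_map_of_mem _ (Equiv.Perm.cycleOf_mem_cycleFactorsFinset_iff.mpr hx)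
  have hxσ : x ∈ σ.support :=
    Equiv.Perm.mem_support_cycleOf_iff.mpr ⟨Equiv.Perm.SameCycle.refl _ _, hx⟩
  have hs2 : (σ ^ (2 * j)) x = x := by
    rw [hσ, Equiv.Perm.cycleOf_zpow_apply_self]
    exact h2j
  -- deduce σ ^ (2j) = 1
  have hd0 : 0 < orderOf σ := by
    rw [hord]; have := hcyc.two_le_card_support; omega
  have hdvd : (orderOf σ : ℤ) ∣ 2 * j := by
    have hmod : σ ^ ((2 * j) % (orderOf σ : ℤ)) = σ ^ (2 * j) := zpow_mod_orderOf σ _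
    have hnn : (0:ℤ) ≤ (2 * j) % (orderOf σ : ℤ) :=
      Int.emod_nonneg _ (by exact_mod_cast hd0.ne')
    have hlt : (2 * j) % (orderOf σ : ℤ) < (orderOf σ : ℤ) :=
      Int.emod_lt_of_pos _ (by exact_mod_cast hd0)
    set k : ℕ := ((2 * j) % (orderOf σ : ℤ)).toNat with hk
    have hkz : (k : ℤ) = (2 * j) % (orderOf σ : ℤ) := Int.toNat_of_nonneg hnn
    have hσk : (σ ^ k) x = x := by
      have : (σ ^ (k:ℤ)) x = x := by rw [hkz, hmod]; exact hs2
      rwa [zpow_natCast] at this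
    have hone : σ ^ k = 1 := (hcyc.pow_eq_one_iff'
      (Equiv.Perm.mem_support.mp hxσ)).mpr hσk
    have : orderOf σ ∣ k := orderOf_dvd_of_pow_eq_one hone
    have hk0 : k = 0 := by
      rcases Nat.eq_zero_or_pos k with h0 | h0
      · exact h0
      · exfalso
        have := Nat.le_of_dvd h0 this
        have : (orderOf σ : ℤ) ≤ (k : ℤ) := by exact_mod_cast this
        omega
    have : (2 * j) % (orderOf σ : ℤ) = 0 := by
      rw [← hkz, hk0]; rfl
    exact Int.dvd_of_emod_eq_zero this
  have hodddvd : (orderOf σ : ℤ) ∣ j := by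
    rw [hord]
    rw [hord] at hdvd
    have hco : IsCoprime ((σ.support.card : ℕ) : ℤ) ((2:ℕ) : ℤ) := by
      rw [Int.isCoprime_iff_gcd_eq_one, Int.gcd_natCast_natCast]
      exact Nat.coprime_two_right.mpr hl
    have := IsCoprime.dvd_of_dvd_mul_left hco (by exact_mod_cast hdvd)
    exact_mod_cast this
  have : σ ^ j = 1 := orderOf_dvd_iff_zpow_eq_one.mp hodddvd
  rw [← Equiv.Perm.cycleOf_zpow_apply_self, ← hσ, this, Equiv.Perm.one_apply]

lemma not_support_of_conj {u g : Perm α} (hu : u * g * u⁻¹ = g ∨ u * g * u⁻¹ = g⁻¹)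
    {x : α} (hx : x ∉ g.support) : u x ∉ g.support := by
  intro hux
  apply hx
  have h1 : (u * g * u⁻¹).support = g.support.map u.toEmbedding := Equiv.Perm.support_conj
  have h2 : (u * g * u⁻¹).support = g.support := by
    rcases hu with h | h <;> rw [h]
    exact Equiv.Perm.support_inv g
  rw [h2] at h1
  rw [h1] at hux
  obtain ⟨z, hz, hze⟩ := Finset.mem_map.mp hux
  have : z = x := u.injective hze
  rwa [← this]

lemma fix_of_not_support {u g : Perm α} (hu : u * g * u⁻¹ = g ∨ u * g * u⁻¹ = g⁻¹)
    (hfix : Fintype.card α ≤ g.support.card + 1) {x : α} (hx : x ∉ g.support) :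
    u x = x := by
  by_contra hne
  have hux : u x ∉ g.support := not_support_of_conj hu hx
  have hsub : ({x, u x} : Finset α) ⊆ g.supportᶜ := by
    intro z hz
    rcases Finset.mem_insert.mp hz with rfl | hz
    · exact Finset.mem_compl.mpr hx
    · rw [Finset.mem_singleton.mp hz]
      exact Finset.mem_compl.mpr hux
  have hcard2 : ({x, u x} : Finset α).card = 2 := by
    rw [Finset.card_insert_of_notMem (by simpa using (Ne.symm hne)), Finset.card_singleton]
  have := Finset.card_le_card hsub
  rw [hcard2, Finset.card_compl] at this
  omega

lemma centralizer_odd {g : Perm α} (hn : g.cycleType.Nodup)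
    (hodd : ∀ l ∈ g.cycleType, Odd l)
    (hfix : Fintype.card α ≤ g.support.card + 1) :
    Odd (Nat.card (Subgroup.centralizer ({g} : Set (Perm α)))) := by
  rw [← Nat.not_even_iff_odd]
  intro heven
  set H := Subgroup.centralizer ({g} : Set (Perm α))
  letI : Fintype H := Fintype.ofFinite _
  rw [Nat.card_eq_fintype_card] at heven
  haveI : Fact (Nat.Prime 2) := ⟨Nat.prime_two⟩
  obtain ⟨c, hc⟩ := exists_prime_orderOf_dvd_card 2 heven.two_dvd
  have hc2 : c ^ 2 = 1 := by rw [← hc]; exact pow_orderOf_eq_one c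
  have hcne : c ≠ 1 := by
    intro h; rw [h, orderOf_one] at hc; omega
  set cc : Perm α := (c : Perm α) with hcc
  have hcc2 : (cc : Perm α) ^ 2 = 1 := by
    have := congrArg (Subtype.val) hc2
    simpa using this
  have hcomm : g * cc = cc * g := by
    have := c.2
    rw [Subgroup.mem_centralizer_iff] at this
    exact this g (Set.mem_singleton g)
  have hconj : cc * g * cc⁻¹ = g := by
    rw [← hcomm]; group
  have : cc = 1 := by
    ext x
    simp only [Equiv.Perm.one_apply]
    by_cases hx : x ∈ g.support
    · obtain ⟨j, hj⟩ := sameCycle_of_conj hn (Or.inl hconj) hx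
      have hcj : Commute (g ^ j) cc := Commute.zpow_left (show Commute g cc from hcomm) j
      -- cc (cc x) = x and cc x = g^j x
      have h2x : cc (cc x) = x := by
        have : (cc ^ 2) x = x := by rw [hcc2]; rfl
        rw [pow_two] at this
        simpa [Equiv.Perm.mul_apply] using this
      have hgj : (g ^ (2 * j)) x = x := by
        have h1 : cc ((g ^ j) x) = (g ^ j) (cc x) := by
          have := congrArg (fun p => p x) hcj.eq
          simpa [Equiv.Perm.mul_apply] using this.symm
        rw [hj] at h1
        rw [h2x] at h1
        rw [← hj] at h1
        have : (g ^ j) ((g ^ j) x) = x := h1.symm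
        rw [two_mul, zpow_add, Equiv.Perm.mul_apply]
        exact this
      have := odd_fix hodd hx hgj
      rw [← hj, this]
    · exact fix_of_not_support (Or.inl hconj) hfix hx
  apply hcne
  apply Subtype.ext
  rw [← hcc, this]
  rfl

lemma conj_pow_odd {G : Type*} [Group G] {u g : G} (h : u * g * u⁻¹ = g⁻¹)
    {r : ℕ} (hr : Odd r) : u ^ r * g * (u ^ r)⁻¹ = g⁻¹ := by
  obtain ⟨k, rfl⟩ := hr
  have hug : u * g = g⁻¹ * u := by rw [← h]; group
  have hug' : u * g⁻¹ = g * u := by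
    have e : g * (u * g) = u := by rw [hug]; group
    calc u * g⁻¹ = (g * (u * g)) * g⁻¹ := by rw [e]
      _ = g * u := by group
  have h2 : Commute (u ^ 2) g := by
    show u ^ 2 * g = g * u ^ 2
    calc u ^ 2 * g = u * (u * g) := by rw [pow_two, mul_assoc]
      _ = u * (g⁻¹ * u) := by rw [hug]
      _ = (u * g⁻¹) * u := by rw [mul_assoc]
      _ = g * u * u := by rw [hug']
      _ = g * u ^ 2 := by rw [pow_two, mul_assoc]
  have hcomm : Commute ((u ^ 2) ^ k) g⁻¹ := (h2.pow_left k).inv_right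
  have e1 : u ^ (2 * k + 1) = (u ^ 2) ^ k * u := by rw [pow_succ, pow_mul]
  rw [e1]
  have : (u ^ 2) ^ k * u * g * ((u ^ 2) ^ k * u)⁻¹
      = (u ^ 2) ^ k * (u * g * u⁻¹) * ((u ^ 2) ^ k)⁻¹ := by group
  rw [this, h, hcomm.eq, mul_assoc, mul_inv_cancel, mul_one]

lemma invol_cycleType {t : Perm α} (ht : t ^ 2 = 1) :
    t.cycleType = Multiset.replicate (Multiset.card t.cycleType) 2 := by
  apply Multiset.eq_replicate_card.mpr
  intro b hb
  have h2 := Equiv.Perm.two_le_of_mem_cycleType hb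
  have hd : b ∣ 2 := dvd_trans (Equiv.Perm.dvd_of_mem_cycleType hb)
    (orderOf_dvd_of_pow_eq_one ht)
  have := Nat.le_of_dvd (by norm_num) hd
  omega

lemma invol_support_card {t g : Perm α} (hn : g.cycleType.Nodup)
    (hodd : ∀ l ∈ g.cycleType, Odd l)
    (hfix : Fintype.card α ≤ g.support.card + 1)
    (ht2 : t ^ 2 = 1) (hconj : t * g * t⁻¹ = g⁻¹) :
    t.support.card + Multiset.card g.cycleType = g.support.card := by
  classical
  have hconj' : ∀ i : ℤ, t * g ^ i * t⁻¹ = g ^ (-i) := by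
    intro i
    rw [← conj_zpow, hconj, inv_zpow, zpow_neg]
  have htt : ∀ z, t (t z) = z := by
    intro z
    have : (t ^ 2) z = z := by rw [ht2]; rfl
    rw [pow_two, Equiv.Perm.mul_apply] at this
    exact this
  set Fix : Finset α := Finset.univ.filter (fun x => t x = x) with hFix
  have hFixc : Fix = t.supportᶜ := by
    ext z
    simp [hFix, Equiv.Perm.mem_support]
  -- complement of g.support is inside Fix
  have hsub : g.supportᶜ ⊆ Fix := by
    intro z hz
    simp only [hFix, Finset.mem_filter, Finset.mem_univ, true_and]
    exact fix_of_not_support (Or.inr hconj) hfix (Finset.mem_compl.mp hz)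
  -- count fixed points inside the support: one per cycle
  have hkey : (Fix ∩ g.support).card = g.cycleFactorsFinset.card := by
    apply Finset.card_bij (fun x _ => g.cycleOf x)
    · intro x hx
      exact Equiv.Perm.cycleOf_mem_cycleFactorsFinset_iff.mpr (Finset.mem_inter.mp hx).2
    · intro x hx y hy he
      obtain ⟨hxF, hxs⟩ := Finset.mem_inter.mp hx
      obtain ⟨hyF, hys⟩ := Finset.mem_inter.mp hy
      simp only [hFix, Finset.mem_filter] at hxF hyF
      have hsame : g.SameCycle x y := by
        have : y ∈ (g.cycleOf y).support :=
          Equiv.Perm.mem_support_cycleOf_iff.mpr ⟨Equiv.Perm.SameCycle.refl _ _, hys⟩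
        rw [← he, Equiv.Perm.mem_support_cycleOf_iff] at this
        exact this.1
      obtain ⟨i, hi⟩ := hsame
      -- t fixes x and y = g^i x; show g^(2i) x = x
      have h1 : t ((g ^ i) x) = (g ^ (-i)) (t x) := by
        have := congrArg (fun p => p (t x)) (hconj' i)
        simp only [Equiv.Perm.mul_apply] at this
        rw [Equiv.Perm.inv_def, Equiv.symm_apply_apply] at this
        exact this
      rw [hi, hyF.2, hxF.2] at h1
      -- h1 : y = g^(-i) x  with y = g^i x
      have h2 : (g ^ (2 * i)) x = x := by
        have : (g ^ i) y = (g ^ i) ((g ^ (-i)) x) := congrArg _ h1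
        rw [← hi] at this
        have h3 : (g ^ i) ((g ^ (-i)) x) = x := by
          rw [← Equiv.Perm.mul_apply, ← zpow_add]
          simp
        rw [h3] at this
        rw [two_mul, zpow_add, Equiv.Perm.mul_apply, hi]
        rw [hi] at this
        exact this
      have := odd_fix hodd hxs h2
      rw [← hi, this]
    · intro σ hσ
      have hcyc : σ.IsCycle := (Equiv.Perm.mem_cycleFactorsFinset_iff.mp hσ).1
      obtain ⟨x₀, hx₀⟩ : σ.support.Nonempty := by
        rw [← Finset.card_pos]
        have := hcyc.two_le_card_support
        omega
      have hσx : σ = g.cycleOf x₀ := Equiv.Perm.cycle_is_cycleOf hx₀ hσ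
      have hx₀s : x₀ ∈ g.support := by
        rw [← Equiv.Perm.cycleOf_mem_cycleFactorsFinset_iff, ← hσx]
        exact hσ
      obtain ⟨j, hj⟩ := sameCycle_of_conj hn (Or.inr hconj) hx₀s
      set l : ℕ := σ.support.card with hl
      have hlodd : Odd l := by
        apply hodd
        rw [Equiv.Perm.cycleType_def]
        exact Multiset.mem_map_of_mem _ hσ
      have hord : orderOf σ = l := hcyc.orderOf
      set k : ℕ := (l + 1) / 2 with hk
      have h2k : 2 * k = l + 1 := by
        rcases hlodd with ⟨c, hc⟩
        omega
      set i : ℤ := j * (k : ℤ) with hi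
      refine ⟨(g ^ i) x₀, ?_, ?_⟩
      · rw [Finset.mem_inter]
        constructor
        · simp only [hFix, Finset.mem_filter, Finset.mem_univ, true_and]
          -- t ((g^i) x₀) = g^(-i) (t x₀) = g^(j-i) x₀ and g^(j-2i) x₀ = x₀
          have h1 : t ((g ^ i) x₀) = (g ^ (-i)) (t x₀) := by
            have := congrArg (fun p => p (t x₀)) (hconj' i)
            simp only [Equiv.Perm.mul_apply] at this
            rw [Equiv.Perm.inv_def, Equiv.symm_apply_apply] at this
            exact this
          have hcomb : (g ^ (-i)) ((g ^ j) x₀) = (g ^ (-i + j)) x₀ := by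
            rw [zpow_add, Equiv.Perm.mul_apply]
          rw [← hj, hcomb] at h1
          have hzero : (g ^ (-i + j - i)) x₀ = x₀ := by
            have hexp : -i + j - i = (l : ℤ) * (-j) := by
              rw [hi]
              have h2kz : (2 : ℤ) * (k : ℤ) = (l : ℤ) + 1 := by exact_mod_cast h2k
              rw [show ((l : ℤ)) = 2 * (k : ℤ) - 1 by omega]
              ring
            rw [hexp]
            have : (σ ^ ((l : ℤ) * (-j))) x₀ = x₀ := by
              rw [zpow_mul]
              have : σ ^ (l : ℤ) = 1 := by
                rw [zpow_natCast, ← hord]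
                exact pow_orderOf_eq_one σ
              rw [this, one_zpow, Equiv.Perm.one_apply]
            rw [hσx, Equiv.Perm.cycleOf_zpow_apply_self] at this
            exact this
          have : (g ^ (-i + j)) x₀ = (g ^ i) ((g ^ (-i + j - i)) x₀) := by
            rw [← Equiv.Perm.mul_apply, ← zpow_add]
            congr 1
            ring
          rw [h1, this, hzero]
        · exact Equiv.Perm.zpow_apply_mem_support.mpr hx₀s
      · have : g.SameCycle x₀ ((g ^ i) x₀) := ⟨i, rfl⟩
        rw [← this.cycleOf_eq, ← hσx]
  -- assemble the counts
  have hdecomp : Fix.card = (Fix ∩ g.support).card + g.supportᶜ.card := by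
    rw [← Finset.card_union_of_disjoint]
    · congr 1
      ext z
      simp only [Finset.mem_union, Finset.mem_inter, Finset.mem_compl]
      constructor
      · rintro h
        by_cases hz : z ∈ g.support
        · exact Or.inl ⟨h, hz⟩
        · exact Or.inr hz
      · rintro (⟨h, _⟩ | h)
        · exact h
        · exact hsub (Finset.mem_compl.mpr h)
    · rw [Finset.disjoint_right]
      intro z hz hz2
      exact (Finset.mem_compl.mp hz) (Finset.mem_inter.mp hz2).2
  have hct : Multiset.card g.cycleType = g.cycleFactorsFinset.card := by
    rw [Equiv.Perm.cycleType_def, Multiset.card_map]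
    rfl
  have h1 : Fix.card = Fintype.card α - t.support.card := by
    rw [hFixc, Finset.card_compl]
  have h2 : g.supportᶜ.card = Fintype.card α - g.support.card := Finset.card_compl _
  have h3 := Finset.card_le_univ t.support
  have h4 := Finset.card_le_univ g.support
  rw [h1, h2, hkey, ← hct] at hdecomp
  omega

lemma comm_sq {G : Type*} [Group G] {u g : G} (h : u * g * u⁻¹ = g⁻¹) :
    Commute (u ^ 2) g := by
  have hug : u * g = g⁻¹ * u := by rw [← h]; group
  have hug' : u * g⁻¹ = g * u := by
    have e : g * (u * g) = u := by rw [hug]; group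
    calc u * g⁻¹ = (g * (u * g)) * g⁻¹ := by rw [e]
      _ = g * u := by group
  show u ^ 2 * g = g * u ^ 2
  calc u ^ 2 * g = u * (u * g) := by rw [pow_two, mul_assoc]
    _ = u * (g⁻¹ * u) := by rw [hug]
    _ = (u * g⁻¹) * u := by rw [mul_assoc]
    _ = g * u * u := by rw [hug']
    _ = g * u ^ 2 := by rw [pow_two, mul_assoc]

theorem stmt_15 (m n : ℕ) (hm : 0 < m) (hn : 2 * n = m * (m + 1))
    (g : Equiv.Perm (Fin n))
    (hg : g.cycleType =
      (((Multiset.range ((m + 1) / 2)).map (fun i => 2 * m - 1 - 4 * i)).filter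
        (fun l => 2 ≤ l))) :
    Odd (Nat.card (Subgroup.centralizer ({g} : Set (Equiv.Perm (Fin n))))) ∧
    ∃ t : Equiv.Perm (Fin n), t ^ 2 = 1 ∧ t⁻¹ * g * t = g⁻¹ ∧
      t.cycleType = Multiset.replicate ((m ^ 2 + 1) / 4) 2 := by
  classical
  have hg' : g.cycleType = MsetX m := by unfold MsetX; exact hg
  obtain ⟨hs1, hs2, hs3⟩ := MsetX_spec m n hm hn
  have hnodup : g.cycleType.Nodup := by rw [hg']; exact MsetX_nodup m
  have hoddl : ∀ l ∈ g.cycleType, Odd l := by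
    rw [hg']; exact fun l hl => MsetX_odd hl
  have hsupp : g.support.card = (MsetX m).sum := by
    rw [← Equiv.Perm.sum_cycleType, hg']
  have hcardα : Fintype.card (Fin n) = n := Fintype.card_fin n
  have hfix : Fintype.card (Fin n) ≤ g.support.card + 1 := by
    rw [hcardα, hsupp]; omega
  have hoddC : Odd (Nat.card (Subgroup.centralizer ({g} : Set (Equiv.Perm (Fin n))))) :=
    centralizer_odd hnodup hoddl hfix
  refine ⟨hoddC, ?_⟩
  by_cases hg2 : g ^ 2 = 1
  · -- degenerate case : g = 1
    have hct0 : g.cycleType = 0 := by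
      rw [Multiset.eq_zero_iff_forall_notMem]
      intro l hl
      have h2 := Equiv.Perm.two_le_of_mem_cycleType hl
      have hdvd : l ∣ 2 := dvd_trans (Equiv.Perm.dvd_of_mem_cycleType hl)
        (orderOf_dvd_of_pow_eq_one hg2)
      have := Nat.le_of_dvd (by norm_num) hdvd
      have hodd := hoddl l hl
      rcases hodd with ⟨c, hc⟩
      omega
    have hgone : g = 1 := Equiv.Perm.cycleType_eq_zero.mp hct0
    have hM0 : MsetX m = 0 := by rw [← hg', hct0]
    have hN0 : (m ^ 2 + 1) / 4 = 0 := by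
      rw [hM0] at hs3
      simpa using hs3.symm
    refine ⟨1, by simp, by simp [hgone], ?_⟩
    rw [hN0, Multiset.replicate_zero, Equiv.Perm.cycleType_one]
  · -- main case
    have hconjg : IsConj g g⁻¹ :=
      Equiv.Perm.isConj_iff_cycleType_eq.mpr (Equiv.Perm.cycleType_inv g).symm
    obtain ⟨u, hu⟩ := isConj_iff.mp hconjg
    have hu2mem : u ^ 2 ∈ Subgroup.centralizer ({g} : Set (Equiv.Perm (Fin n))) := by
      rw [Subgroup.mem_centralizer_iff]
      intro h hh
      rw [Set.mem_singleton_iff] at hh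
      subst hh
      exact ((comm_sq hu).symm).eq
    set H := Subgroup.centralizer ({g} : Set (Equiv.Perm (Fin n)))
    set r : ℕ := orderOf (u ^ 2) with hr
    have hreq : orderOf (⟨u ^ 2, hu2mem⟩ : H) = r := Subgroup.orderOf_mk _ _
    have hrodd : Odd r := by
      have hdvd : r ∣ Nat.card H := by
        rw [← hreq]; exact orderOf_dvd_natCard _
      rcases Nat.even_or_odd r with he | ho
      · exfalso
        have h2r : 2 ∣ Nat.card H := (even_iff_two_dvd.mp he).trans hdvd
        rw [Nat.odd_iff] at hoddC
        omega
      · exact ho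
    have hur : (u ^ 2) ^ r = 1 := by
      rw [hr]; exact pow_orderOf_eq_one _
    set t : Equiv.Perm (Fin n) := u ^ r with htdef
    have ht2 : t ^ 2 = 1 := by
      rw [htdef, ← pow_mul, mul_comm, pow_mul]
      exact hur
    have htconj : t * g * t⁻¹ = g⁻¹ := conj_pow_odd hu hrodd
    have htinv : t⁻¹ = t := by
      apply inv_eq_of_mul_eq_one_right
      rw [← pow_two]
      exact ht2
    have e : t⁻¹ * g * t = t * g * t⁻¹ := by rw [htinv]
    refine ⟨t, ht2, by rw [e]; exact htconj, ?_⟩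
    have hct := invol_cycleType ht2
    have hsum := Equiv.Perm.sum_cycleType t
    rw [hct, Multiset.sum_replicate, smul_eq_mul] at hsum
    have hsc := invol_support_card hnodup hoddl hfix ht2 htconj
    rw [hg'] at hsc
    -- hsc : #t.support + card (MsetX m) = #g.support
    -- hsupp : #g.support = sum ; hs3 : sum = card + 2 * N
    have hcardt : Multiset.card t.cycleType = (m ^ 2 + 1) / 4 := by
      have hcards := Multiset.card_replicate ((m ^ 2 + 1) / 4) 2
      omega
    rw [hcardt] at hct
    exact hct
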